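/- Let n ∈ ℕ, let p ∈ MvPolynomial (Fin n) ℝ be multilinear, and let W ≥ 0 be a real number. If 0 ≤ eval y p ≤ W for every y : Fin n → ℝ with y(i) ∈ {0, 1} for all i, then 0 ≤ eval x p ≤ W for every x : Fin n → ℝ with x(i) ∈ [0, 1] for all i. -/
import Mathlib

open MvPolynomial

lemma eval_affine {n : ℕ} (p : MvPolynomial (Fin n) ℝ) (i : Fin n)
    (hp : p.degreeOf i ≤ 1) (x : Fin n → ℝ) :
    eval x p = (1 - x i) * eval (Function.update x i 0) p
      + x i * eval (Function.update x i 1) p := by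
  have key : ∀ (a : ℝ) (m : Fin n →₀ ℕ),
      (∏ j, (Function.update x i a) j ^ m j)
        = a ^ m i * ∏ j ∈ Finset.univ \ {i}, x j ^ m j := by
    intro a m
    have : (fun j => (Function.update x i a) j ^ m j)
        = Function.update (fun j => x j ^ m j) i (a ^ m i) := by
      funext j
      by_cases h : j = i
      · subst h; simp
      · simp [Function.update_of_ne h]
    rw [this, Finset.prod_update_of_mem (Finset.mem_univ i)]
  rw [eval_eq', eval_eq', eval_eq', Finset.mul_sum, Finset.mul_sum, ← Finset.sum_add_distrib]
  apply Finset.sum_congr rfl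
  intro m hm
  have hmi : m i ≤ 1 := le_trans (MvPolynomial.monomial_le_degreeOf i hm) hp
  have hx : (∏ j, x j ^ m j) = x i ^ m i * ∏ j ∈ Finset.univ \ {i}, x j ^ m j := by
    rw [← Finset.prod_erase_mul Finset.univ _ (Finset.mem_univ i), Finset.sdiff_singleton_eq_erase]; ring
  rw [hx, key, key]
  interval_cases h : m i <;> ring

theorem stmt9 (n : ℕ) (p : MvPolynomial (Fin n) ℝ)
    (hp : ∀ i : Fin n, p.degreeOf i ≤ 1)
    (W : ℝ) (hW : 0 ≤ W)
    (hbool : ∀ y : Fin n → ℝ, (∀ i, y i = 0 ∨ y i = 1) →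
      0 ≤ MvPolynomial.eval y p ∧ MvPolynomial.eval y p ≤ W)
    (x : Fin n → ℝ) (hx : ∀ i, 0 ≤ x i ∧ x i ≤ 1) :
    0 ≤ MvPolynomial.eval x p ∧ MvPolynomial.eval x p ≤ W := by
  suffices h : ∀ s : Finset (Fin n), ∀ x : Fin n → ℝ,
      (∀ i, 0 ≤ x i ∧ x i ≤ 1) → (∀ i, i ∉ s → x i = 0 ∨ x i = 1) →
      0 ≤ MvPolynomial.eval x p ∧ MvPolynomial.eval x p ≤ W by
    exact h Finset.univ x hx (fun i hi => absurd (Finset.mem_univ i) hi)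
  intro s
  induction s using Finset.induction_on with
  | empty =>
    intro x hx hb
    exact hbool x (fun i => hb i (Finset.notMem_empty i))
  | @insert a s ha ih =>
    intro x hx hb
    have h0 := ih (Function.update x a 0)
      (fun i => by
        by_cases h : i = a
        · subst h; simp
        · simpa [Function.update_of_ne h] using hx i)
      (fun i hi => by
        by_cases h : i = a
        · subst h; simp
        · rw [Function.update_of_ne h]
          exact hb i (fun hmem => hi (Finset.mem_of_mem_insert_of_ne hmem h)))
    have h1 := ih (Function.update x a 1)
      (fun i => by
        by_cases h : i = a
        · subst h; simp
        · simpa [Function.update_of_ne h] using hx i)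
      (fun i hi => by
        by_cases h : i = a
        · subst h; simp
        · rw [Function.update_of_ne h]
          exact hb i (fun hmem => hi (Finset.mem_of_mem_insert_of_ne hmem h)))
    rw [eval_affine p a (hp a) x]
    obtain ⟨hxa0, hxa1⟩ := hx a
    constructor
    · have := h0.1; have := h1.1; nlinarith
    · have := h0.2; have := h1.2; nlinarith
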